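/- Assume q^{2l} = 1 where l ≥ 2 is the smallest positive integer with this property. Let n be an integer with 1 ≤ n < l, let ν ∈ ℂ with ν ≠ 0, and let c ∈ ℂ satisfy (q²+1)c = (q^{2n}+1)ν. Let V = ℂ^n with basis v₀, …, v_{n−1} and define: ρ_C v_p = c v_p; ρ₀ v_p = λ⁻¹ (c − q^{2p} ν) v_p; ρ₋ v_p = v_{p+1} for p < n−1 and ρ₋ v_{n−1} = 0; ρ₊ v₀ = 0 and ρ₊ v_p = λ⁻¹ [p] q^{p−2} ν ( (q²+1)c − (q^{2p}+1)ν ) v_{p−1} for 1 ≤ p ≤ n−1. Then (ρ₀, ρ₊, ρ₋, ρ_C) is an irreducible n-dimensional representation of B. -/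

import Mathlib

noncomputable section

namespace SL2q

/-- The q-number [p] = (q^p − q^{−p})/(q − q⁻¹). -/
def qNum (q : ℂ) (p : ℕ) : ℂ := (q ^ p - q⁻¹ ^ p) / (q - q⁻¹)

/-- The ρ₊ coefficient. -/
def Cf (q ν c : ℂ) (j : ℕ) : ℂ :=
  (q - q⁻¹)⁻¹ * qNum q j * (q ^ j * q⁻¹ ^ 2) * ν *
    ((q ^ 2 + 1) * c - (q ^ (2 * j) + 1) * ν)

lemma sum_ite_coe {n : ℕ} (m : ℕ) (f : Fin n → ℂ) :
    (∑ k : Fin n, if m = (k : ℕ) then f k else 0) =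
      if h : m < n then f ⟨m, h⟩ else 0 := by
  split_ifs with h
  · rw [Finset.sum_eq_single (⟨m, h⟩ : Fin n)]
    · simp
    · intro k _ hk
      rw [if_neg]
      intro he; exact hk (Fin.ext he.symm)
    · simp
  · apply Finset.sum_eq_zero
    intro k _
    rw [if_neg]
    intro he; exact h (he ▸ k.isLt)

lemma sum_ite_succ {n : ℕ} (m : ℕ) (f : Fin n → ℂ) :
    (∑ k : Fin n, if m = (k : ℕ) + 1 then f k else 0) =
      if h : m - 1 < n ∧ 0 < m then f ⟨m - 1, h.1⟩ else 0 := by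
  split_ifs with h
  · rw [Finset.sum_eq_single (⟨m - 1, h.1⟩ : Fin n)]
    · have hcoe : ((⟨m - 1, h.1⟩ : Fin n) : ℕ) = m - 1 := rfl
      rw [hcoe, if_pos (by omega)]
    · intro k _ hk
      rw [if_neg]
      intro he; apply hk; apply Fin.ext
      have hcoe : ((⟨m - 1, h.1⟩ : Fin n) : ℕ) = m - 1 := rfl
      rw [hcoe]; omega
    · simp
  · apply Finset.sum_eq_zero
    intro k _
    rw [if_neg]
    intro he
    exact h ⟨by omega, by omega⟩

lemma sum_ite_coe' {n : ℕ} (m : ℕ) (f : Fin n → ℂ) :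
    (∑ k : Fin n, if (k : ℕ) = m then f k else 0) =
      if h : m < n then f ⟨m, h⟩ else 0 := by
  rw [← sum_ite_coe m f]
  congr 1
  ext k
  congr 1
  exact propext ⟨fun h => h.symm, fun h => h.symm⟩

lemma sum_ite_succ' {n : ℕ} (m : ℕ) (f : Fin n → ℂ) :
    (∑ k : Fin n, if (k : ℕ) + 1 = m then f k else 0) =
      if h : m - 1 < n ∧ 0 < m then f ⟨m - 1, h.1⟩ else 0 := by
  rw [← sum_ite_succ m f]
  congr 1
  ext k
  congr 1
  exact propext ⟨fun h => h.symm, fun h => h.symm⟩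

lemma key1 (q c ν T : ℂ) (hq : q ≠ 0) (hlam : q - q⁻¹ ≠ 0) :
    q ^ 2 * ((q - q⁻¹)⁻¹ * (c - T * ν)) - (q - q⁻¹)⁻¹ * (c - q ^ 2 * T * ν)
      = q * c := by
  have hu : q * q⁻¹ = 1 := mul_inv_cancel₀ hq
  have he : (q - q⁻¹) * (q - q⁻¹)⁻¹ = 1 := mul_inv_cancel₀ hlam
  linear_combination (c * q) * he + (c * (q - q⁻¹)⁻¹) * hu

lemma key2 (q c ν T : ℂ) (hq : q ≠ 0) (hlam : q - q⁻¹ ≠ 0) :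
    q⁻¹ ^ 2 * ((q - q⁻¹)⁻¹ * (c - q ^ 2 * T * ν)) - (q - q⁻¹)⁻¹ * (c - T * ν)
      = -(q⁻¹ * c) := by
  have hu : q * q⁻¹ = 1 := mul_inv_cancel₀ hq
  have he : (q - q⁻¹) * (q - q⁻¹)⁻¹ = 1 := mul_inv_cancel₀ hlam
  linear_combination (-(q⁻¹ * c)) * he +
    ((c - T * ν * (q * q⁻¹ + 1)) * (q - q⁻¹)⁻¹) * hu

lemma Cstep' (q ν c a : ℂ) (hq : q ≠ 0) (ha : a ≠ 0) (hlam : q - q⁻¹ ≠ 0) :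
    (q - q⁻¹)⁻¹ * ((a * q - (a * q)⁻¹) / (q - q⁻¹)) * (a * q * q⁻¹ ^ 2) * ν *
        ((q ^ 2 + 1) * c - (a ^ 2 * q ^ 2 + 1) * ν)
    - (q - q⁻¹)⁻¹ * ((a - a⁻¹) / (q - q⁻¹)) * (a * q⁻¹ ^ 2) * ν *
        ((q ^ 2 + 1) * c - (a ^ 2 + 1) * ν)
    = (q + q⁻¹) * ((c - (q - q⁻¹) * ((q - q⁻¹)⁻¹ * (c - a ^ 2 * ν)))
        * ((q - q⁻¹)⁻¹ * (c - a ^ 2 * ν))) := by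
  have hu : q * q⁻¹ = 1 := mul_inv_cancel₀ hq
  have hb : a * a⁻¹ = 1 := mul_inv_cancel₀ ha
  have he : (q - q⁻¹) * (q - q⁻¹)⁻¹ = 1 := mul_inv_cancel₀ hlam
  have hiq : (a * q)⁻¹ = a⁻¹ * q⁻¹ := by rw [mul_inv]
  rw [hiq, div_eq_mul_inv, div_eq_mul_inv]
  set e := (q - q⁻¹)⁻¹ with hedef
  set u := q⁻¹ with hudef
  set b := a⁻¹ with hbdef
  have hbr : (a * q - b * u) * q * ((q ^ 2 + 1) * c - (a ^ 2 * q ^ 2 + 1) * ν)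
      - (a - b) * ((q ^ 2 + 1) * c - (a ^ 2 + 1) * ν)
      = a * ((q ^ 2 - 1) * ((q ^ 2 + 1) * (c - a ^ 2 * ν))) := by
    linear_combination (-(b * ((q ^ 2 + 1) * c - (a ^ 2 * q ^ 2 + 1) * ν))) * hu +
      (a * ν * (q ^ 2 - 1)) * hb
  have hL : e * ((a * q - b * u) * e) * (a * q * u ^ 2) * ν *
        ((q ^ 2 + 1) * c - (a ^ 2 * q ^ 2 + 1) * ν)
      - e * ((a - b) * e) * (a * u ^ 2) * ν *
        ((q ^ 2 + 1) * c - (a ^ 2 + 1) * ν)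
      = e ^ 2 * a ^ 2 * u ^ 2 * ν * ((q ^ 2 - 1) * (q ^ 2 + 1)) * (c - a ^ 2 * ν) := by
    linear_combination (e ^ 2 * a * u ^ 2 * ν) * hbr
  have hfin : e ^ 2 * u ^ 2 * ((q ^ 2 - 1) * (q ^ 2 + 1)) = (q + u) * e := by
    linear_combination (e ^ 2 * q ^ 2 * (q * u + 1)) * hu + (e * (q + u)) * he
  have hR : (q + u) * ((c - (q - u) * (e * (c - a ^ 2 * ν))) * (e * (c - a ^ 2 * ν)))
      = (q + u) * a ^ 2 * ν * (e * (c - a ^ 2 * ν)) := by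
    linear_combination (-((q + u) * e * (c - a ^ 2 * ν) * (c - a ^ 2 * ν))) * he
  rw [hL, hR]
  linear_combination (a ^ 2 * ν * (c - a ^ 2 * ν)) * hfin

lemma Cstep (q ν c : ℂ) (hq : q ≠ 0) (hlam : q - q⁻¹ ≠ 0) (j : ℕ) :
    Cf q ν c (j + 1) - Cf q ν c j
      = (q + q⁻¹) * ((c - (q - q⁻¹) * ((q - q⁻¹)⁻¹ * (c - q ^ (2 * j) * ν)))
          * ((q - q⁻¹)⁻¹ * (c - q ^ (2 * j) * ν))) := by
  have e2 : q ^ (2 * (j + 1)) = (q ^ j) ^ 2 * q ^ 2 := by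
    rw [show 2 * (j + 1) = j * 2 + 2 by ring, pow_add, pow_mul]
  have e3 : q ^ (j + 1) = q ^ j * q := pow_succ q j
  have e4 : (q⁻¹) ^ (j + 1) = (q ^ j * q)⁻¹ := by rw [inv_pow, pow_succ]
  have e5 : (q⁻¹) ^ j = (q ^ j)⁻¹ := inv_pow q j
  have e1 : q ^ (2 * j) = (q ^ j) ^ 2 := by rw [mul_comm, pow_mul]
  simp only [Cf, qNum, e2, e3, e4, e5, e1]
  exact Cstep' q ν c (q ^ j) hq (pow_ne_zero _ hq) hlam

/-- the m-th basis vector (0 if out of range). -/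
def esF (n m : ℕ) : Fin n → ℂ :=
  if h : m < n then Pi.single (⟨m, h⟩ : Fin n) 1 else 0

theorem hw_rep_dim_n (q : ℂ) (hq : q ≠ 0) (hq2 : q ^ 2 ≠ 1)
    (l : ℕ) (hl : 2 ≤ l) (hq2l : q ^ (2 * l) = 1)
    (hmin : ∀ m : ℕ, 0 < m → m < l → q ^ (2 * m) ≠ 1)
    (n : ℕ) (hn1 : 1 ≤ n) (hnl : n < l)
    (ν c : ℂ) (hν : ν ≠ 0) (hcν : (q ^ 2 + 1) * c = (q ^ (2 * n) + 1) * ν) :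
    let MC : Matrix (Fin n) (Fin n) ℂ := c • 1
    let M0 : Matrix (Fin n) (Fin n) ℂ :=
      Matrix.diagonal fun p => (q - q⁻¹)⁻¹ * (c - q ^ (2 * (p : ℕ)) * ν)
    let Mm : Matrix (Fin n) (Fin n) ℂ :=
      Matrix.of fun i j => if (i : ℕ) = (j : ℕ) + 1 then 1 else 0
    let Mp : Matrix (Fin n) (Fin n) ℂ :=
      Matrix.of fun i j =>
        if (i : ℕ) + 1 = (j : ℕ) then
          (q - q⁻¹)⁻¹ * qNum q (j : ℕ) * (q ^ (j : ℕ) * q⁻¹ ^ 2) * ν *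
            ((q ^ 2 + 1) * c - (q ^ (2 * (j : ℕ)) + 1) * ν)
        else 0
    (((q ^ 2 : ℂ) • (M0 * Mp) - Mp * M0 = q • (MC * Mp)) ∧
     ((q⁻¹ ^ 2 : ℂ) • (M0 * Mm) - Mm * M0 = -(q⁻¹ • (MC * Mm))) ∧
     (Mp * Mm - Mm * Mp = ((q + q⁻¹) : ℂ) • ((MC - (q - q⁻¹) • M0) * M0)) ∧
     (MC * M0 = M0 * MC) ∧ (MC * Mp = Mp * MC) ∧ (MC * Mm = Mm * MC)) ∧
    Nontrivial (Fin n → ℂ) ∧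
    (∀ W : Submodule ℂ (Fin n → ℂ),
      (∀ v ∈ W, M0.mulVec v ∈ W) → (∀ v ∈ W, Mp.mulVec v ∈ W) →
      (∀ v ∈ W, Mm.mulVec v ∈ W) → (∀ v ∈ W, MC.mulVec v ∈ W) →
      W = ⊥ ∨ W = ⊤) := by
  intro MC M0 Mm Mp
  have hMCdef : MC = c • (1 : Matrix (Fin n) (Fin n) ℂ) := rfl
  have hM0def : M0 = Matrix.diagonal
      (fun p : Fin n => (q - q⁻¹)⁻¹ * (c - q ^ (2 * (p : ℕ)) * ν)) := rfl
  have hMmdef : Mm = Matrix.of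
      (fun i j : Fin n => if (i : ℕ) = (j : ℕ) + 1 then (1 : ℂ) else 0) := rfl
  have hMpdef : Mp = Matrix.of
      (fun i j : Fin n => if (i : ℕ) + 1 = (j : ℕ) then Cf q ν c (j : ℕ) else 0) := rfl
  have hQ : q ^ 2 - 1 ≠ 0 := sub_ne_zero.mpr hq2
  have hlam : q - q⁻¹ ≠ 0 := by
    have h : q - q⁻¹ = (q ^ 2 - 1) / q := by
      field_simp
    rw [h]
    exact div_ne_zero hQ hq
  -- powers are distinct
  have hpow : ∀ a b : ℕ, a < b → b < l → q ^ (2 * a) ≠ q ^ (2 * b) := by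
    intro a b hab hbl h
    have h2 : q ^ (2 * a) * q ^ (2 * (b - a)) = q ^ (2 * b) := by
      rw [← pow_add]; congr 1; omega
    have h3 : q ^ (2 * a) * q ^ (2 * (b - a)) = q ^ (2 * a) * 1 := by
      rw [mul_one, h2, ← h]
    exact hmin (b - a) (by omega) (by omega)
      (mul_left_cancel₀ (pow_ne_zero _ hq) h3)
  have hCfn : Cf q ν c n = 0 := by
    have h5 : (q ^ 2 + 1) * c - (q ^ (2 * n) + 1) * ν = 0 := by
      rw [hcν]; ring
    rw [Cf, h5, mul_zero]
  have hCf0 : Cf q ν c 0 = 0 := by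
    simp [Cf, qNum]
  refine ⟨⟨?_, ?_, ?_, ?_, ?_, ?_⟩, ?_, ?_⟩
  -- relation 1
  · rw [hM0def, hMpdef, hMCdef, Matrix.smul_mul, Matrix.one_mul]
    ext i j
    simp only [Matrix.smul_apply, Matrix.sub_apply, Matrix.diagonal_mul,
      Matrix.mul_diagonal, Matrix.of_apply, smul_eq_mul]
    rcases eq_or_ne ((i : ℕ) + 1) ((j : ℕ)) with hij | hij
    · rw [if_pos hij]
      have hT : q ^ (2 * (j : ℕ)) = q ^ 2 * q ^ (2 * (i : ℕ)) := by
        rw [← hij, show 2 * ((i : ℕ) + 1) = 2 * (i : ℕ) + 2 by ring, pow_add]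
        ring
      rw [hT]
      linear_combination (Cf q ν c (j : ℕ)) * key1 q c ν (q ^ (2 * (i : ℕ))) hq hlam
    · rw [if_neg hij]; ring
  -- relation 2
  · rw [hM0def, hMmdef, hMCdef, Matrix.smul_mul, Matrix.one_mul]
    ext i j
    simp only [Matrix.smul_apply, Matrix.sub_apply, Matrix.neg_apply,
      Matrix.diagonal_mul, Matrix.mul_diagonal, Matrix.of_apply, smul_eq_mul]
    rcases eq_or_ne ((i : ℕ)) ((j : ℕ) + 1) with hij | hij
    · rw [if_pos hij]
      have hT : q ^ (2 * (i : ℕ)) = q ^ 2 * q ^ (2 * (j : ℕ)) := by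
        rw [hij, show 2 * ((j : ℕ) + 1) = 2 * (j : ℕ) + 2 by ring, pow_add]
        ring
      rw [hT]
      linear_combination key2 q c ν (q ^ (2 * (j : ℕ))) hq hlam
    · rw [if_neg hij]; ring
  -- relation 3
  · rw [hM0def, hMpdef, hMmdef, hMCdef]
    ext i j
    rw [Matrix.sub_apply, Matrix.mul_apply, Matrix.mul_apply, Matrix.smul_apply,
      Matrix.mul_diagonal, Matrix.sub_apply, Matrix.smul_apply, Matrix.smul_apply,
      Matrix.one_apply, Matrix.diagonal_apply]
    simp only [Matrix.of_apply, ite_mul, zero_mul, mul_ite, mul_one, mul_zero,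
      one_mul, smul_eq_mul]
    rw [sum_ite_coe', sum_ite_succ']
    by_cases hij : i = j
    · subst hij
      rw [if_pos rfl, if_pos rfl]
      have hA : (if h : (i : ℕ) + 1 < n then
          (if (i : ℕ) + 1 = ((⟨(i : ℕ) + 1, h⟩ : Fin n) : ℕ)
            then Cf q ν c ((⟨(i : ℕ) + 1, h⟩ : Fin n) : ℕ) else 0) else 0)
          = Cf q ν c ((i : ℕ) + 1) := by
        by_cases hb : (i : ℕ) + 1 < n
        · rw [dif_pos hb]
          have hc : ((⟨(i : ℕ) + 1, hb⟩ : Fin n) : ℕ) = (i : ℕ) + 1 := rfl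
          rw [hc, if_pos rfl]
        · rw [dif_neg hb]
          have : (i : ℕ) + 1 = n := by have := i.isLt; omega
          rw [this, hCfn]
      have hB : (if h : (i : ℕ) - 1 < n ∧ 0 < (i : ℕ) then
          (if (i : ℕ) = ((⟨(i : ℕ) - 1, h.1⟩ : Fin n) : ℕ) + 1
            then Cf q ν c (i : ℕ) else 0) else 0)
          = Cf q ν c (i : ℕ) := by
        by_cases hb : (i : ℕ) - 1 < n ∧ 0 < (i : ℕ)
        · rw [dif_pos hb]
          have hc : ((⟨(i : ℕ) - 1, hb.1⟩ : Fin n) : ℕ) = (i : ℕ) - 1 := rfl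
          rw [hc, if_pos (by omega)]
        · rw [dif_neg hb]
          have : (i : ℕ) = 0 := by have := i.isLt; omega
          rw [this, hCf0]
      rw [hA, hB]
      linear_combination Cstep q ν c hq hlam (i : ℕ)
    · have hijn : (i : ℕ) ≠ (j : ℕ) := fun h => hij (Fin.ext h)
      rw [if_neg hij, if_neg hij]
      have hA : (if h : (j : ℕ) + 1 < n then
          (if (i : ℕ) + 1 = ((⟨(j : ℕ) + 1, h⟩ : Fin n) : ℕ)
            then Cf q ν c ((⟨(j : ℕ) + 1, h⟩ : Fin n) : ℕ) else 0) else 0)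
          = 0 := by
        by_cases hb : (j : ℕ) + 1 < n
        · rw [dif_pos hb]
          have hc : ((⟨(j : ℕ) + 1, hb⟩ : Fin n) : ℕ) = (j : ℕ) + 1 := rfl
          rw [hc, if_neg (by omega)]
        · rw [dif_neg hb]
      have hB : (if h : (j : ℕ) - 1 < n ∧ 0 < (j : ℕ) then
          (if (i : ℕ) = ((⟨(j : ℕ) - 1, h.1⟩ : Fin n) : ℕ) + 1
            then Cf q ν c (j : ℕ) else 0) else 0)
          = 0 := by
        by_cases hb : (j : ℕ) - 1 < n ∧ 0 < (j : ℕ)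
        · rw [dif_pos hb]
          have hc : ((⟨(j : ℕ) - 1, hb.1⟩ : Fin n) : ℕ) = (j : ℕ) - 1 := rfl
          rw [hc, if_neg (by omega)]
        · rw [dif_neg hb]
      rw [hA, hB]
      ring
  -- commutations
  · rw [hMCdef, Matrix.smul_mul, Matrix.mul_smul, Matrix.one_mul, Matrix.mul_one]
  · rw [hMCdef, Matrix.smul_mul, Matrix.mul_smul, Matrix.one_mul, Matrix.mul_one]
  · rw [hMCdef, Matrix.smul_mul, Matrix.mul_smul, Matrix.one_mul, Matrix.mul_one]
  -- nontrivial
  · exact ⟨0, fun _ => (1 : ℂ), fun h => zero_ne_one (congrFun h ⟨0, by omega⟩)⟩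
  -- irreducibility
  · intro W hW0 hWp hWm hWC
    by_cases hbot : W = ⊥
    · exact Or.inl hbot
    right
    have hdist : ∀ i j : Fin n, i ≠ j →
        (q - q⁻¹)⁻¹ * (c - q ^ (2 * (i : ℕ)) * ν)
          ≠ (q - q⁻¹)⁻¹ * (c - q ^ (2 * (j : ℕ)) * ν) := by
      intro i j hij h
      have h' := mul_left_cancel₀ (inv_ne_zero hlam) h
      have h2 : q ^ (2 * (i : ℕ)) * ν = q ^ (2 * (j : ℕ)) * ν := by
        linear_combination -h'
      have h3 : q ^ (2 * (i : ℕ)) = q ^ (2 * (j : ℕ)) := mul_right_cancel₀ hν h2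
      have hijn : (i : ℕ) ≠ (j : ℕ) := fun hh => hij (Fin.ext hh)
      rcases Nat.lt_or_ge (i : ℕ) (j : ℕ) with hlt | hge
      · exact hpow _ _ hlt (j.isLt.trans hnl) h3
      · exact hpow _ _ (by omega) (i.isLt.trans hnl) h3.symm
    have hM0v : ∀ v : Fin n → ℂ, M0.mulVec v =
        fun i : Fin n => ((q - q⁻¹)⁻¹ * (c - q ^ (2 * (i : ℕ)) * ν)) * v i := by
      intro v; ext i
      rw [hM0def]
      exact Matrix.mulVec_diagonal _ _ _
    -- step 1: single vectors from nonzero members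
    have hsingle : ∀ (m : ℕ) (w : Fin n → ℂ), w ∈ W →
        (Finset.univ.filter (fun k => w k ≠ 0)).card ≤ m →
        ∀ p, w p ≠ 0 → Pi.single p (1 : ℂ) ∈ W := by
      intro m
      induction m with
      | zero =>
        intro w hw hcard p hp
        exfalso
        have hmem : p ∈ Finset.univ.filter (fun k => w k ≠ 0) := by simp [hp]
        have := Finset.card_pos.mpr ⟨p, hmem⟩
        omega
      | succ m ih =>
        intro w hw hcard p hp
        by_cases hall : ∀ k, k ≠ p → w k = 0
        · have hw' : Pi.single p (1 : ℂ) = (w p)⁻¹ • w := by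
            ext k
            by_cases hk : k = p
            · subst hk
              simp [Pi.single_apply, inv_mul_cancel₀ hp]
            · simp [Pi.single_apply, hk, hall k hk]
          rw [hw']
          exact W.smul_mem _ hw
        · push_neg at hall
          obtain ⟨j, hjp, hjw⟩ := hall
          set dj : ℂ := (q - q⁻¹)⁻¹ * (c - q ^ (2 * (j : ℕ)) * ν) with hdj
          set w' : Fin n → ℂ := fun k =>
            (((q - q⁻¹)⁻¹ * (c - q ^ (2 * (k : ℕ)) * ν)) - dj) * w k with hw'def
          have hw'W : w' ∈ W := by
            have h1 : M0.mulVec w - dj • w ∈ W :=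
              W.sub_mem (hW0 w hw) (W.smul_mem _ hw)
            have h2 : M0.mulVec w - dj • w = w' := by
              ext k
              rw [Pi.sub_apply, hM0v, Pi.smul_apply, smul_eq_mul, hw'def]
              ring
            rwa [h2] at h1
          have hcard' : (Finset.univ.filter (fun k => w' k ≠ 0)).card ≤ m := by
            have hsub : Finset.univ.filter (fun k => w' k ≠ 0) ⊆
                (Finset.univ.filter (fun k => w k ≠ 0)).erase j := by
              intro k hk
              simp only [Finset.mem_filter, Finset.mem_univ, true_and, hw'def] at hk
              rw [Finset.mem_erase]
              constructor
              · intro he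
                subst he
                exact hk (by rw [hdj]; ring)
              · simp only [Finset.mem_filter, Finset.mem_univ, true_and]
                intro h0
                exact hk (by rw [h0, mul_zero])
            have hjmem : j ∈ Finset.univ.filter (fun k => w k ≠ 0) := by simp [hjw]
            have hcle := Finset.card_le_card hsub
            rw [Finset.card_erase_of_mem hjmem] at hcle
            omega
          have hwp' : w' p ≠ 0 := by
            rw [hw'def]
            exact mul_ne_zero (sub_ne_zero.mpr (hdist p j (fun h => hjp h.symm))) hp
          exact ih w' hw'W hcard' p hwp'
    obtain ⟨w, hwW, hwne⟩ := (Submodule.ne_bot_iff W).mp hbot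
    have hex : ∃ p, w p ≠ 0 := by
      by_contra hcon
      push_neg at hcon
      exact hwne (funext fun k => hcon k)
    obtain ⟨p, hp⟩ := hex
    have hpW : Pi.single p (1 : ℂ) ∈ W :=
      hsingle _ w hwW le_rfl p hp
    -- es basics
    have hesp : esF n (p : ℕ) ∈ W := by
      rw [esF, dif_pos p.isLt]
      have : (⟨(p : ℕ), p.isLt⟩ : Fin n) = p := Fin.ext rfl
      rw [this]
      exact hpW
    have hdown : ∀ m, esF n m ∈ W → esF n (m + 1) ∈ W := by
      intro m hm
      by_cases h1 : m + 1 < n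
      · have h0 : m < n := by omega
        have hvec : Mm.mulVec (esF n m) = esF n (m + 1) := by
          rw [esF, esF, dif_pos h0, dif_pos h1, hMmdef, Matrix.mulVec_single]
          ext i
          simp only [Pi.smul_apply, Matrix.col_apply, op_smul_eq_mul, Matrix.of_apply, mul_one, Pi.single_apply]
          by_cases hi : (i : ℕ) = m + 1
          · rw [if_pos hi, if_pos (Fin.ext hi)]
          · rw [if_neg hi, if_neg (fun hh => hi (by rw [hh]))]
        rw [← hvec]
        exact hWm _ hm
      · rw [esF, dif_neg h1]
        exact W.zero_mem
    have hup : ∀ m, m + 1 < n → esF n (m + 1) ∈ W → esF n m ∈ W := by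
      intro m h1 hm
      have h0 : m < n := by omega
      have hCne : Cf q ν c (m + 1) ≠ 0 := by
        rw [Cf]
        apply mul_ne_zero (mul_ne_zero (mul_ne_zero (mul_ne_zero
          (inv_ne_zero hlam) ?_) ?_) hν) ?_
        · -- qNum ≠ 0
          rw [qNum]
          apply div_ne_zero _ hlam
          intro hnum
          have h' : q ^ (m + 1) = q⁻¹ ^ (m + 1) := sub_eq_zero.mp hnum
          have h2 : q ^ (2 * (m + 1)) = 1 := by
            calc q ^ (2 * (m + 1)) = q ^ (m + 1) * q ^ (m + 1) := by
                  rw [two_mul, pow_add]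
            _ = q ^ (m + 1) * q⁻¹ ^ (m + 1) := by rw [h']
            _ = (q * q⁻¹) ^ (m + 1) := (mul_pow _ _ _).symm
            _ = 1 := by rw [mul_inv_cancel₀ hq, one_pow]
          exact hmin (m + 1) (by omega) (by omega) h2
        · exact mul_ne_zero (pow_ne_zero _ hq) (pow_ne_zero _ (inv_ne_zero hq))
        · have h5 : (q ^ 2 + 1) * c - (q ^ (2 * (m + 1)) + 1) * ν
              = (q ^ (2 * n) - q ^ (2 * (m + 1))) * ν := by
            linear_combination hcν
          rw [h5]
          exact mul_ne_zero
            (sub_ne_zero.mpr (fun h => hpow (m + 1) n (by omega) hnl h.symm)) hν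
      have hvec : Mp.mulVec (esF n (m + 1)) = Cf q ν c (m + 1) • esF n m := by
        rw [esF, esF, dif_pos h1, dif_pos h0, hMpdef, Matrix.mulVec_single]
        ext i
        simp only [Matrix.col_apply, op_smul_eq_mul, Matrix.of_apply, mul_one, Pi.smul_apply, Pi.single_apply,
          smul_eq_mul]
        by_cases hi : (i : ℕ) + 1 = m + 1
        · rw [if_pos hi, if_pos (Fin.ext (by omega : (i : ℕ) = m)), mul_one]
        · rw [if_neg hi, if_neg (fun hh => hi (by rw [hh])), mul_zero]
      have heq : esF n m = (Cf q ν c (m + 1))⁻¹ • Mp.mulVec (esF n (m + 1)) := by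
        rw [hvec, smul_smul, inv_mul_cancel₀ hCne, one_smul]
      rw [heq]
      exact W.smul_mem _ (hWp _ hm)
    have htop : ∀ t : ℕ, esF n ((p : ℕ) + t) ∈ W := by
      intro t
      induction t with
      | zero => simpa using hesp
      | succ t iht =>
        have := hdown _ iht
        rwa [show (p : ℕ) + (t + 1) = ((p : ℕ) + t) + 1 by ring]
    have hlast : esF n (n - 1) ∈ W := by
      have := htop (n - 1 - (p : ℕ))
      rwa [show (p : ℕ) + (n - 1 - (p : ℕ)) = n - 1 by have := p.isLt; omega] at this
    have halldown : ∀ t, t < n → esF n (n - 1 - t) ∈ W := by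
      intro t
      induction t with
      | zero => intro _; simpa using hlast
      | succ t iht =>
        intro ht
        have h1 : (n - 1 - (t + 1)) + 1 = n - 1 - t := by omega
        apply hup
        · omega
        · rw [h1]
          exact iht (by omega)
    have hall : ∀ i : Fin n, Pi.single i (1 : ℂ) ∈ W := by
      intro i
      have h1 := halldown (n - 1 - (i : ℕ)) (by have := i.isLt; omega)
      rw [show n - 1 - (n - 1 - (i : ℕ)) = (i : ℕ) by have := i.isLt; omega] at h1
      rw [esF, dif_pos i.isLt] at h1
      have : (⟨(i : ℕ), i.isLt⟩ : Fin n) = i := Fin.ext rfl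
      rwa [this] at h1
    rw [eq_top_iff]
    intro v _
    have hv : v = ∑ i : Fin n, v i • (Pi.single i (1 : ℂ) : Fin n → ℂ) := by
      ext k
      rw [Finset.sum_apply]
      simp only [Pi.smul_apply, Pi.single_apply, smul_eq_mul, mul_ite, mul_one,
        mul_zero]
      rw [Finset.sum_ite_eq Finset.univ k v]
      simp
    rw [hv]
    exact Submodule.sum_mem _ (fun i _ => W.smul_mem _ (hall i))

end SL2q
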